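/- The optimal spoofing objective f(v) = (ρa)²/(2a) + Q v²/(2a) + (Qρ+ν)v + ρaμ⁺(2ι(v)−1), with ι(v) = b/(a+b+wv), has first-order condition at an interior optimum v > 0 given by Q v/a + (Qρ+ν) = 2ρwμ⁺((1−ī)/ī)·ι(v)², so the optimal volume expressed in terms of the optimal imbalance ι is v(ι) = (a/Q)·[2ρwμ⁺((1−ī)/ī)ι² − (Qρ+ν)]⁺. -/

import Mathlib

/-- First-order condition for the optimal spoofing volume: if `v > 0` minimizes the spoofing
objective `f` over `[0,∞)`, then `Qv/a + (Qρ+ν) = 2ρwμ⁺((1−ibar)/ibar)ι(v)²`, and hence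
`v = (a/Q)[2ρwμ⁺((1−ibar)/ibar)ι(v)² − (Qρ+ν)]⁺`. -/
theorem stmt_9 (a Q w μp ρ ν ibar b : ℝ)
    (ha : 0 < a) (hQ : 0 < Q) (hw : 0 < w) (hμ : 0 < μp) (hρ : 0 < ρ) (hν : 0 ≤ ν)
    (hibar0 : 0 < ibar) (hibar1 : ibar < 1) (hb : b = a * ibar / (1 - ibar))
    (f : ℝ → ℝ)
    (hf : f = fun v => (ρ * a) ^ 2 / (2 * a) + Q * v ^ 2 / (2 * a) + (Q * ρ + ν) * v
      + ρ * a * μp * (2 * (b / (a + b + w * v)) - 1))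
    (v : ℝ) (hv : 0 < v) (hmin : IsMinOn f (Set.Ici 0) v) :
    Q * v / a + (Q * ρ + ν)
      = 2 * ρ * w * μp * ((1 - ibar) / ibar) * (b / (a + b + w * v)) ^ 2 ∧
    v = (a / Q)
      * max (2 * ρ * w * μp * ((1 - ibar) / ibar) * (b / (a + b + w * v)) ^ 2 - (Q * ρ + ν)) 0 := by
  have hib : 0 < 1 - ibar := by linarith
  have hbpos : 0 < b := by rw [hb]; positivity
  have hD : 0 < a + b + w * v := by positivity
  have hD0 : a + b + w * v ≠ 0 := ne_of_gt hD
  -- derivative of the inverse-depth term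
  have h1 : HasDerivAt (fun x : ℝ => b / (a + b + w * x)) (-(b * w) / (a + b + w * v) ^ 2) v := by
    have hd : HasDerivAt (fun x : ℝ => a + b + w * x) w v := by
      simpa using ((hasDerivAt_id v).const_mul w).const_add (a + b)
    have := (hasDerivAt_const v b).div hd hD0
    refine this.congr_deriv ?_
    ring
  have hq : HasDerivAt (fun x : ℝ => Q * x ^ 2 / (2 * a)) (Q * v / a) v := by
    have := ((hasDerivAt_pow 2 v).const_mul Q).div_const (2 * a)
    refine this.congr_deriv ?_
    push_cast
    field_simp
  have hl : HasDerivAt (fun x : ℝ => (Q * ρ + ν) * x) (Q * ρ + ν) v := by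
    simpa using (hasDerivAt_id v).const_mul (Q * ρ + ν)
  have hlast : HasDerivAt (fun x : ℝ => ρ * a * μp * (2 * (b / (a + b + w * x)) - 1))
      (-(2 * ρ * a * μp * (b * w) / (a + b + w * v) ^ 2)) v := by
    have := ((h1.const_mul 2).sub_const 1).const_mul (ρ * a * μp)
    refine this.congr_deriv ?_
    field_simp
  have hderiv : HasDerivAt f
      (Q * v / a + (Q * ρ + ν) - 2 * ρ * a * μp * (b * w) / (a + b + w * v) ^ 2) v := by
    rw [hf]
    have h2 := (((hasDerivAt_const v ((ρ * a) ^ 2 / (2 * a))).add hq).add hl).add hlast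
    refine h2.congr_deriv ?_
    ring
  have hloc : IsLocalMin f v := hmin.isLocalMin (Ici_mem_nhds hv)
  have hzero := hloc.hasDerivAt_eq_zero hderiv
  have key : Q * v / a + (Q * ρ + ν) = 2 * ρ * a * μp * (b * w) / (a + b + w * v) ^ 2 := by
    linarith
  have heq : 2 * ρ * w * μp * ((1 - ibar) / ibar) * (b / (a + b + w * v)) ^ 2
      = 2 * ρ * a * μp * (b * w) / (a + b + w * v) ^ 2 := by
    have hab : (1 - ibar) / ibar * b = a := by
      rw [hb]; field_simp
    calc 2 * ρ * w * μp * ((1 - ibar) / ibar) * (b / (a + b + w * v)) ^ 2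
        = 2 * ρ * ((1 - ibar) / ibar * b) * μp * (b * w) / (a + b + w * v) ^ 2 := by
          field_simp
      _ = 2 * ρ * a * μp * (b * w) / (a + b + w * v) ^ 2 := by rw [hab]
  constructor
  · rw [heq]; exact key
  · have h3 : 2 * ρ * w * μp * ((1 - ibar) / ibar) * (b / (a + b + w * v)) ^ 2 - (Q * ρ + ν)
        = Q * v / a := by rw [heq]; linarith
    rw [h3, max_eq_left (by positivity)]
    field_simp
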